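/- Let φ₊ be the function defined by φ₊(x) = (2k/(k + r₋)) e^{iβ(r₋ − k)} e^{−i r₋ x} for x < β and φ₊(x) = e^{−i k x} + ((k − r₋)/(k + r₋)) e^{−2 i k β} e^{i k x} for x ≥ β, and let φ₋ be the function defined by φ₋(x) = e^{i r₋ x} + ((r₋ − k)/(r₋ + k)) e^{2 i r₋ β} e^{−i r₋ x} for x < β and φ₋(x) = (2 r₋/(k + r₋)) e^{iβ(r₋ − k)} e^{i k x} for x ≥ β. Then their Wronskian is constant: for every x ∈ ℝ, φ₋(x) φ₊'(x) − φ₋'(x) φ₊(x) = −4 i k r₋/(k + r₋) · e^{iβ(r₋ − k)}. -/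

import Mathlib

open Complex MeasureTheory
open scoped Classical

/-- `u` is a solution of `-u'' + V u = z u`: `u` is differentiable with continuous
derivative, and the derivative satisfies the integrated form of the ODE. -/
def IsSolution (V : ℝ → ℝ) (z : ℂ) (u : ℝ → ℂ) : Prop :=
  Differentiable ℝ u ∧ Continuous (deriv u) ∧
    ∀ x : ℝ, deriv u x = deriv u 0 + ∫ t in (0:ℝ)..x, ((V t : ℂ) - z) * u t

private lemma hasDerivAt_cexp_mul (c : ℂ) (x : ℝ) :
    HasDerivAt (fun t : ℝ => Complex.exp (c * t)) (c * Complex.exp (c * x)) x := by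
  have h : HasDerivAt (fun t : ℝ => (c * t : ℂ)) c x := by
    simpa using (Complex.ofRealCLM.hasDerivAt (x := x)).const_mul c
  simpa [mul_comm] using h.cexp

private lemma exp_mul_exp_neg' (a : ℂ) : Complex.exp a * Complex.exp (-a) = 1 := by
  rw [← Complex.exp_add, add_neg_cancel, Complex.exp_zero]

private lemma e1 (β : ℝ) (k rm : ℂ) : Complex.exp (Complex.I * (β : ℂ) * (rm - k)) *
    Complex.exp (-(Complex.I * rm * β)) = Complex.exp (-(Complex.I * k * β)) := by
  rw [← Complex.exp_add]; congr 1; ring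

private lemma e2 (β : ℝ) (k : ℂ) : Complex.exp (-(2 * Complex.I * k * (β : ℂ))) *
    Complex.exp (Complex.I * k * β) = Complex.exp (-(Complex.I * k * β)) := by
  rw [← Complex.exp_add]; congr 1; ring

private lemma e3 (β : ℝ) (rm : ℂ) : Complex.exp (2 * Complex.I * rm * (β : ℂ)) *
    Complex.exp (-(Complex.I * rm * β)) = Complex.exp (Complex.I * rm * β) := by
  rw [← Complex.exp_add]; congr 1; ring

private lemma e4 (β : ℝ) (k rm : ℂ) : Complex.exp (Complex.I * (β : ℂ) * (rm - k)) *
    Complex.exp (Complex.I * k * β) = Complex.exp (Complex.I * rm * β) := by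
  rw [← Complex.exp_add]; congr 1; ring

noncomputable section WronAux

private def Fp1 (β : ℝ) (k rm : ℂ) (t : ℝ) : ℂ :=
  (2 * k / (k + rm)) * Complex.exp (Complex.I * (β : ℂ) * (rm - k)) *
    Complex.exp (-(Complex.I * rm * t))

private def Fp2 (β : ℝ) (k rm : ℂ) (t : ℝ) : ℂ :=
  Complex.exp (-(Complex.I * k * t)) +
    ((k - rm) / (k + rm)) * Complex.exp (-(2 * Complex.I * k * (β : ℂ))) *
      Complex.exp (Complex.I * k * t)

private def Fm1 (β : ℝ) (k rm : ℂ) (t : ℝ) : ℂ :=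
  Complex.exp (Complex.I * rm * t) +
    ((rm - k) / (rm + k)) * Complex.exp (2 * Complex.I * rm * (β : ℂ)) *
      Complex.exp (-(Complex.I * rm * t))

private def Fm2 (β : ℝ) (k rm : ℂ) (t : ℝ) : ℂ :=
  (2 * rm / (k + rm)) * Complex.exp (Complex.I * (β : ℂ) * (rm - k)) *
    Complex.exp (Complex.I * k * t)

private def dp1 (β : ℝ) (k rm : ℂ) (t : ℝ) : ℂ :=
  (2 * k / (k + rm)) * Complex.exp (Complex.I * (β : ℂ) * (rm - k)) *
    (-(Complex.I * rm) * Complex.exp (-(Complex.I * rm * t)))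

private def dp2 (β : ℝ) (k rm : ℂ) (t : ℝ) : ℂ :=
  -(Complex.I * k) * Complex.exp (-(Complex.I * k * t)) +
    ((k - rm) / (k + rm)) * Complex.exp (-(2 * Complex.I * k * (β : ℂ))) *
      (Complex.I * k * Complex.exp (Complex.I * k * t))

private def dm1 (β : ℝ) (k rm : ℂ) (t : ℝ) : ℂ :=
  Complex.I * rm * Complex.exp (Complex.I * rm * t) +
    ((rm - k) / (rm + k)) * Complex.exp (2 * Complex.I * rm * (β : ℂ)) *
      (-(Complex.I * rm) * Complex.exp (-(Complex.I * rm * t)))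

private def dm2 (β : ℝ) (k rm : ℂ) (t : ℝ) : ℂ :=
  (2 * rm / (k + rm)) * Complex.exp (Complex.I * (β : ℂ) * (rm - k)) *
    (Complex.I * k * Complex.exp (Complex.I * k * t))

private lemma hFp1 (β : ℝ) (k rm : ℂ) (t : ℝ) :
    HasDerivAt (Fp1 β k rm) (dp1 β k rm t) t := by
  unfold Fp1 dp1
  have := (hasDerivAt_cexp_mul (-(Complex.I * rm)) t).const_mul
    ((2 * k / (k + rm)) * Complex.exp (Complex.I * (β : ℂ) * (rm - k)))
  simpa only [neg_mul, mul_assoc] using this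

private lemma hFp2 (β : ℝ) (k rm : ℂ) (t : ℝ) :
    HasDerivAt (Fp2 β k rm) (dp2 β k rm t) t := by
  unfold Fp2 dp2
  have h1 := hasDerivAt_cexp_mul (-(Complex.I * k)) t
  have h2 := (hasDerivAt_cexp_mul (Complex.I * k) t).const_mul
    (((k - rm) / (k + rm)) * Complex.exp (-(2 * Complex.I * k * (β : ℂ))))
  simpa only [neg_mul, mul_assoc, Pi.add_def] using h1.add h2

private lemma hFm1 (β : ℝ) (k rm : ℂ) (t : ℝ) :
    HasDerivAt (Fm1 β k rm) (dm1 β k rm t) t := by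
  unfold Fm1 dm1
  have h1 := hasDerivAt_cexp_mul (Complex.I * rm) t
  have h2 := (hasDerivAt_cexp_mul (-(Complex.I * rm)) t).const_mul
    (((rm - k) / (rm + k)) * Complex.exp (2 * Complex.I * rm * (β : ℂ)))
  simpa only [neg_mul, mul_assoc, Pi.add_def] using h1.add h2

private lemma hFm2 (β : ℝ) (k rm : ℂ) (t : ℝ) :
    HasDerivAt (Fm2 β k rm) (dm2 β k rm t) t := by
  unfold Fm2 dm2
  have := (hasDerivAt_cexp_mul (Complex.I * k) t).const_mul
    ((2 * rm / (k + rm)) * Complex.exp (Complex.I * (β : ℂ) * (rm - k)))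
  simpa only [neg_mul, mul_assoc] using this

private lemma hval_p (β : ℝ) {k rm : ℂ} (hne : k + rm ≠ 0) :
    Fp1 β k rm β = Fp2 β k rm β := by
  unfold Fp1 Fp2
  field_simp
  linear_combination (norm := ring_nf) 2 * k * (e1 β k rm) + (rm - k) * (e2 β k)

private lemma hder_p (β : ℝ) {k rm : ℂ} (hne : k + rm ≠ 0) :
    dp1 β k rm β = dp2 β k rm β := by
  unfold dp1 dp2
  field_simp
  linear_combination (norm := ring_nf) (-(2 * k * rm)) * (e1 β k rm) +
    (k * rm - k ^ 2) * (e2 β k)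

private lemma hval_m (β : ℝ) {k rm : ℂ} (hne : k + rm ≠ 0) :
    Fm1 β k rm β = Fm2 β k rm β := by
  have hne' : rm + k ≠ 0 := by rwa [add_comm] at hne
  unfold Fm1 Fm2
  field_simp
  linear_combination (norm := ring_nf) (rm ^ 2 - k ^ 2) * (e3 β rm) + (-(2 * rm * (k + rm))) * (e4 β k rm)

private lemma hder_m (β : ℝ) {k rm : ℂ} (hne : k + rm ≠ 0) :
    dm1 β k rm β = dm2 β k rm β := by
  have hne' : rm + k ≠ 0 := by rwa [add_comm] at hne
  unfold dm1 dm2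
  field_simp
  linear_combination (norm := ring_nf) (rm * k ^ 2 - rm ^ 3) * (e3 β rm) +
    (-(2 * rm * k ^ 2 + 2 * rm ^ 2 * k)) * (e4 β k rm)

private lemma wr1 (β : ℝ) {k rm : ℂ} (hne : k + rm ≠ 0) (x : ℝ) :
    Fm1 β k rm x * dp1 β k rm x - dm1 β k rm x * Fp1 β k rm x =
      -4 * Complex.I * k * rm / (k + rm) * Complex.exp (Complex.I * (β : ℂ) * (rm - k)) := by
  have h1 : Complex.exp (Complex.I * rm * x) * Complex.exp (-(Complex.I * rm * x)) = 1 :=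
    exp_mul_exp_neg' _
  unfold Fm1 dp1 dm1 Fp1
  linear_combination (-4 * Complex.I * k * rm / (k + rm) *
    Complex.exp (Complex.I * (β : ℂ) * (rm - k))) * h1

private lemma wr2 (β : ℝ) {k rm : ℂ} (hne : k + rm ≠ 0) (x : ℝ) :
    Fm2 β k rm x * dp2 β k rm x - dm2 β k rm x * Fp2 β k rm x =
      -4 * Complex.I * k * rm / (k + rm) * Complex.exp (Complex.I * (β : ℂ) * (rm - k)) := by
  have h1 : Complex.exp (Complex.I * k * x) * Complex.exp (-(Complex.I * k * x)) = 1 :=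
    exp_mul_exp_neg' _
  unfold Fm2 dp2 dm2 Fp2
  linear_combination (-4 * Complex.I * k * rm / (k + rm) *
    Complex.exp (Complex.I * (β : ℂ) * (rm - k))) * h1

end WronAux

theorem wronskian_constant
    (β Vp Vm : ℝ) (k rm : ℂ)
    (hrm : rm ^ 2 = k ^ 2 + (Vp : ℂ) - (Vm : ℂ)) (hne : k + rm ≠ 0)
    (φp φm : ℝ → ℂ)
    (hφp : ∀ x : ℝ, φp x =
      if x < β then
        (2 * k / (k + rm)) * Complex.exp (Complex.I * (β : ℂ) * (rm - k)) *
          Complex.exp (-(Complex.I * rm * x))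
      else
        Complex.exp (-(Complex.I * k * x)) +
          ((k - rm) / (k + rm)) * Complex.exp (-(2 * Complex.I * k * (β : ℂ))) *
            Complex.exp (Complex.I * k * x))
    (hφm : ∀ x : ℝ, φm x =
      if x < β then
        Complex.exp (Complex.I * rm * x) +
          ((rm - k) / (rm + k)) * Complex.exp (2 * Complex.I * rm * (β : ℂ)) *
            Complex.exp (-(Complex.I * rm * x))
      else
        (2 * rm / (k + rm)) * Complex.exp (Complex.I * (β : ℂ) * (rm - k)) *
          Complex.exp (Complex.I * k * x)) :
    ∀ x : ℝ, φm x * deriv φp x - deriv φm x * φp x =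
      -4 * Complex.I * k * rm / (k + rm) * Complex.exp (Complex.I * (β : ℂ) * (rm - k)) := by
  have hφp' : ∀ x : ℝ, φp x = if x < β then Fp1 β k rm x else Fp2 β k rm x := by
    intro x; rw [hφp x]; rfl
  have hφm' : ∀ x : ℝ, φm x = if x < β then Fm1 β k rm x else Fm2 β k rm x := by
    intro x; rw [hφm x]; rfl
  have hp : ∀ x : ℝ, HasDerivAt φp (if x < β then dp1 β k rm x else dp2 β k rm x) x := by
    intro x
    rcases lt_trichotomy x β with hx | hx | hx
    · rw [if_pos hx]
      exact (hFp1 β k rm x).congr_of_eventuallyEq <| by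
        filter_upwards [Iio_mem_nhds hx] with y hy
        rw [hφp' y, if_pos (Set.mem_Iio.mp hy)]
    · subst hx
      rw [if_neg (lt_irrefl x)]
      have hleft : HasDerivWithinAt φp (dp2 x k rm x) (Set.Iic x) x := by
        have h := (hFp1 x k rm x).hasDerivWithinAt (s := Set.Iic x)
        rw [hder_p x hne] at h
        refine h.congr (fun y hy => ?_) ?_
        · rcases lt_or_eq_of_le (Set.mem_Iic.mp hy) with h' | h'
          · rw [hφp' y, if_pos h']
          · subst h'; rw [hφp' y, if_neg (lt_irrefl y)]; exact (hval_p y hne).symm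
        · rw [hφp' x, if_neg (lt_irrefl x)]; exact (hval_p x hne).symm
      have hright : HasDerivWithinAt φp (dp2 x k rm x) (Set.Ici x) x := by
        have h := (hFp2 x k rm x).hasDerivWithinAt (s := Set.Ici x)
        refine h.congr (fun y hy => ?_) ?_
        · rw [hφp' y, if_neg (not_lt.mpr (Set.mem_Ici.mp hy))]
        · rw [hφp' x, if_neg (lt_irrefl x)]
      have h := hleft.union hright
      rw [Set.Iic_union_Ici] at h
      exact hasDerivWithinAt_univ.mp h
    · rw [if_neg (not_lt.mpr hx.le)]
      exact (hFp2 β k rm x).congr_of_eventuallyEq <| by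
        filter_upwards [Ioi_mem_nhds hx] with y hy
        rw [hφp' y, if_neg (not_lt.mpr (le_of_lt (Set.mem_Ioi.mp hy)))]
  have hm : ∀ x : ℝ, HasDerivAt φm (if x < β then dm1 β k rm x else dm2 β k rm x) x := by
    intro x
    rcases lt_trichotomy x β with hx | hx | hx
    · rw [if_pos hx]
      exact (hFm1 β k rm x).congr_of_eventuallyEq <| by
        filter_upwards [Iio_mem_nhds hx] with y hy
        rw [hφm' y, if_pos (Set.mem_Iio.mp hy)]
    · subst hx
      rw [if_neg (lt_irrefl x)]
      have hleft : HasDerivWithinAt φm (dm2 x k rm x) (Set.Iic x) x := by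
        have h := (hFm1 x k rm x).hasDerivWithinAt (s := Set.Iic x)
        rw [hder_m x hne] at h
        refine h.congr (fun y hy => ?_) ?_
        · rcases lt_or_eq_of_le (Set.mem_Iic.mp hy) with h' | h'
          · rw [hφm' y, if_pos h']
          · subst h'; rw [hφm' y, if_neg (lt_irrefl y)]; exact (hval_m y hne).symm
        · rw [hφm' x, if_neg (lt_irrefl x)]; exact (hval_m x hne).symm
      have hright : HasDerivWithinAt φm (dm2 x k rm x) (Set.Ici x) x := by
        have h := (hFm2 x k rm x).hasDerivWithinAt (s := Set.Ici x)
        refine h.congr (fun y hy => ?_) ?_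
        · rw [hφm' y, if_neg (not_lt.mpr (Set.mem_Ici.mp hy))]
        · rw [hφm' x, if_neg (lt_irrefl x)]
      have h := hleft.union hright
      rw [Set.Iic_union_Ici] at h
      exact hasDerivWithinAt_univ.mp h
    · rw [if_neg (not_lt.mpr hx.le)]
      exact (hFm2 β k rm x).congr_of_eventuallyEq <| by
        filter_upwards [Ioi_mem_nhds hx] with y hy
        rw [hφm' y, if_neg (not_lt.mpr (le_of_lt (Set.mem_Ioi.mp hy)))]
  intro x
  rw [(hp x).deriv, (hm x).deriv, hφp' x, hφm' x]
  by_cases hx : x < β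
  · simp only [if_pos hx]
    exact wr1 β hne x
  · simp only [if_neg hx]
    exact wr2 β hne x
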